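/- arXiv:2601.00375 — 5 statements merged into one kernel-verified Lean document; each statement's English description precedes it below -/
import Mathlib

section
/- Let B ∈ ℝ^{n×n} be a symmetric matrix and F = {x ∈ ℝ^n : xᵀBx = 0}. Then the recession cone of F is REC_F = {y ∈ ℝ^n : yᵀBy = 0 and xᵀBy = 0 for all x ∈ F}. -/
open Finset Matrix Pointwise

noncomputable section

/-- An order-`d`, dimension-`n` real tensor: entries indexed by `Fin d → Fin n`. -/
abbrev Tensor (d n : ℕ) : Type := (Fin d → Fin n) → ℝ

/-- Entrywise inner product of two tensors. -/
def tInner {d n : ℕ} (A B : Tensor d n) : ℝ := ∑ i : Fin d → Fin n, A i * B i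

/-- `Md d x` is the `d`-fold symmetric outer product of the vector `x`. -/
def Md {n : ℕ} (d : ℕ) (x : Fin n → ℝ) : Tensor d n := fun i => ∏ t, x (i t)

/-- A tensor is symmetric if its entries are invariant under permutations of the indices. -/
def IsSymT {d n : ℕ} (A : Tensor d n) : Prop :=
  ∀ (σ : Equiv.Perm (Fin d)) (i : Fin d → Fin n), A (i ∘ σ) = A i

/-- The recession cone of a set `F`. -/
def recCone {n : ℕ} (F : Set (Fin n → ℝ)) : Set (Fin n → ℝ) :=
  {y | ∀ x ∈ F, ∀ lam : ℝ, 0 ≤ lam → x + lam • y ∈ F}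

/-- Mode product `X ×₁ D ×₂ D ⋯ ×_d D` of a tensor with the matrix `D` on every mode. -/
def modeProd {d n p : ℕ} (X : Tensor d n) (D : Matrix (Fin p) (Fin n) ℝ) : Tensor d p :=
  fun i => ∑ j : Fin d → Fin n, X j * ∏ t, D (i t) (j t)

/-- The cone of completely positive tensors of order `d` and dimension `n`. -/
def CP (d n : ℕ) : Set (Tensor d n) :=
  {X | ∃ (k : ℕ) (y : Fin k → (Fin n → ℝ)), (∀ i j, 0 ≤ y i j) ∧ X = ∑ i, Md d (y i)}

/-- A tensor is copositive if `A x^d ≥ 0` for all entrywise nonnegative `x`. -/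
def Copos {d n : ℕ} (A : Tensor d n) : Prop :=
  ∀ x : Fin n → ℝ, (∀ j, 0 ≤ x j) → 0 ≤ tInner A (Md d x)

/-- The subtensor of `X` obtained by restricting all indices to the last `n` coordinates. -/
def restr {d n : ℕ} (X : Tensor d (n+1)) : Tensor d n :=
  fun i => X (fun t => Fin.succ (i t))

/-- For a symmetric matrix `B` and `F = {x : xᵀBx = 0}`, the recession cone
of `F` is `{y : yᵀBy = 0 and xᵀBy = 0 for all x ∈ F}`. -/
theorem recCone_of_quadratic_eq {n : ℕ} (B : Matrix (Fin n) (Fin n) ℝ) (hB : B.IsSymm)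
    (F : Set (Fin n → ℝ)) (hF : F = {x | x ⬝ᵥ B.mulVec x = 0}) :
    recCone F = {y | y ⬝ᵥ B.mulVec y = 0 ∧ ∀ x ∈ F, x ⬝ᵥ B.mulVec y = 0} := by

  have hsym : ∀ u v : Fin n → ℝ, u ⬝ᵥ B.mulVec v = v ⬝ᵥ B.mulVec u := by
    intro u v
    rw [Matrix.dotProduct_mulVec, ← hB, Matrix.vecMul_transpose, dotProduct_comm, hB]
  have hexp : ∀ (x y : Fin n → ℝ) (l : ℝ),
      (x + l • y) ⬝ᵥ B.mulVec (x + l • y)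
        = x ⬝ᵥ B.mulVec x + (2*l) * (x ⬝ᵥ B.mulVec y) + l^2 * (y ⬝ᵥ B.mulVec y) := by
    intro x y l
    simp only [Matrix.mulVec_add, Matrix.mulVec_smul, add_dotProduct,
      dotProduct_add, smul_dotProduct, dotProduct_smul, smul_eq_mul,
      hsym y x]
    ring
  have h0 : (0 : Fin n → ℝ) ∈ F := by
    rw [hF]; simp [dotProduct_zero]
  ext y
  constructor
  · intro hy
    have hyy : y ⬝ᵥ B.mulVec y = 0 := by
      have := hy 0 h0 1 zero_le_one
      rw [hF] at this
      simpa [hexp] using this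
    refine ⟨hyy, fun x hx => ?_⟩
    have hx0 : x ⬝ᵥ B.mulVec x = 0 := by rw [hF] at hx; exact hx
    have h1 := hy x hx 1 zero_le_one
    rw [hF, Set.mem_setOf_eq, hexp, hx0, hyy] at h1
    linarith
  · rintro ⟨hyy, hxy⟩ x hx l hl
    rw [hF]
    have hx0 : x ⬝ᵥ B.mulVec x = 0 := by rw [hF] at hx; exact hx
    show (x + l • y) ⬝ᵥ B.mulVec (x + l • y) = 0
    rw [hexp, hx0, hyy, hxy x hx]
    ring
end
end

section
/- Let f(x) = A_f^h x^d be a homogeneous polynomial of degree d with A_f^h ∈ S^{d,n}, and let f̄(y) = A_f^h (y_1,…,y_n)^d for y ∈ ℝ^{n+1} (i.e., the coefficient tensor of f zero-padded to Ā ∈ S^{d,n+1}). If the problems min f(x) over x ∈ F and min f̄(y) over y ∈ F̄ both have optimal solutions, then they share the same optimal value. -/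
open Finset Matrix Pointwise

noncomputable section

/-- The homogeneous POP over `F = {x : Bx ≤ b, x ≥ 0}` and its homogenized
problem over `F̄ = {y : Ay ≥ 0, aᵀy = 1}` share the same optimal value. -/
theorem homogenized_same_value {d : ℕ}
{m n : ℕ} (B : Matrix (Fin m) (Fin n) ℝ) (b : Fin m → ℝ)
    (F : Set (Fin n → ℝ))
    (hF : F = {x | (∀ i, B.mulVec x i ≤ b i) ∧ ∀ j, 0 ≤ x j})
    (al : Fin n → ℝ) (hal : ∀ j, 0 ≤ al j) (halF : ∀ x ∈ F, al ⬝ᵥ x ≤ 1)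
    (a : Fin (n+1) → ℝ) (ha : a = Fin.snoc al 1)
    (A : Matrix (Fin (m + (n+1))) (Fin (n+1)) ℝ)
    (hA1 : ∀ (i : Fin m) (j : Fin (n+1)),
      A (Fin.castAdd (n+1) i) j = b i * a j - (Fin.snoc (B i) 0 : Fin (n+1) → ℝ) j)
    (hA2 : ∀ (i j : Fin (n+1)), A (Fin.natAdd m i) j = if i = j then 1 else 0)
    (Fb : Set (Fin (n+1) → ℝ))
    (hFb : Fb = {y | (∀ i, 0 ≤ A.mulVec y i) ∧ a ⬝ᵥ y = 1})
    (Ah : Tensor d n) (hsym : IsSymT Ah)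
    (f : (Fin n → ℝ) → ℝ) (hf : ∀ x, f x = tInner Ah (Md d x))
    (fb : (Fin (n+1) → ℝ) → ℝ)
    (hfb : ∀ y, fb y = tInner Ah (Md d (fun i => y (Fin.castSucc i))))
    (xbar : Fin n → ℝ) (hx : xbar ∈ F) (hxopt : ∀ x ∈ F, f xbar ≤ f x)
    (ybar : Fin (n+1) → ℝ) (hy : ybar ∈ Fb) (hyopt : ∀ y ∈ Fb, fb ybar ≤ fb y) :
    f xbar = fb ybar := by
  have key : ∀ i : Fin (n+1), (Fin.snoc al 1 : Fin (n+1) → ℝ) i = a i := by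
    intro i; rw [ha]
  -- row computations
  have hmvNat : ∀ (y : Fin (n+1) → ℝ) (i : Fin (n+1)),
      A.mulVec y (Fin.natAdd m i) = y i := by
    intro y i
    simp [Matrix.mulVec, dotProduct, hA2, ite_mul]
  have hmvCast : ∀ (y : Fin (n+1) → ℝ) (i : Fin m),
      A.mulVec y (Fin.castAdd (n+1) i) =
        b i * (a ⬝ᵥ y) - (∑ j : Fin n, B i j * y (Fin.castSucc j)) := by
    intro y i
    simp only [Matrix.mulVec, dotProduct, hA1, sub_mul, Finset.sum_sub_distrib,
      ← Finset.mul_sum, mul_assoc]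
    congr 1
    rw [Fin.sum_univ_castSucc]
    simp
  -- Direction 1 : project ybar to x ∈ F
  rw [hFb] at hy
  obtain ⟨hy1, hy2⟩ := hy
  set x : Fin n → ℝ := fun i => ybar (Fin.castSucc i) with hxdef
  have hybarpos : ∀ j, 0 ≤ ybar j := by
    intro j
    have := hy1 (Fin.natAdd m j)
    rwa [hmvNat] at this
  have hxF : x ∈ F := by
    rw [hF]
    refine ⟨fun i => ?_, fun j => hybarpos _⟩
    have h := hy1 (Fin.castAdd (n+1) i)
    rw [hmvCast, hy2, mul_one] at h
    simp only [Matrix.mulVec, dotProduct]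
    linarith
  have hfx : f x = fb ybar := by rw [hf, hfb]
  have h1 : f xbar ≤ fb ybar := by rw [← hfx]; exact hxopt x hxF
  -- Direction 2 : lift xbar to y ∈ Fb
  have hx' := hx
  rw [hF] at hx'
  obtain ⟨hx1, hx2⟩ := hx'
  have hxt : 0 ≤ 1 - al ⬝ᵥ xbar := by have := halF xbar hx; linarith
  set y : Fin (n+1) → ℝ := Fin.snoc xbar (1 - al ⬝ᵥ xbar) with hydef
  have hycast : ∀ i : Fin n, y (Fin.castSucc i) = xbar i := by
    intro i; simp [hydef]
  have hypos : ∀ j, 0 ≤ y j := by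
    intro j
    induction j using Fin.lastCases with
    | last => simpa [hydef] using hxt
    | cast i => rw [hycast]; exact hx2 i
  have hay : a ⬝ᵥ y = 1 := by
    simp only [dotProduct, ha, hydef]
    rw [Fin.sum_univ_castSucc]
    simp [dotProduct]
  have hyFb : y ∈ Fb := by
    rw [hFb]
    refine ⟨fun i => ?_, hay⟩
    induction i using Fin.addCases with
    | left i =>
      rw [hmvCast, hay, mul_one]
      have := hx1 i
      simp only [Matrix.mulVec, dotProduct] at this
      have he : (∑ j : Fin n, B i j * y (Fin.castSucc j)) = ∑ j : Fin n, B i j * xbar j := by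
        exact Finset.sum_congr rfl (fun j _ => by rw [hycast])
      rw [he]; linarith
    | right i =>
      rw [hmvNat]; exact hypos i
  have hfy : fb y = f xbar := by
    rw [hf, hfb]
    congr 1
    funext i
    unfold Md
    exact Finset.prod_congr rfl (fun t _ => hycast (i t))
  have h2 : fb ybar ≤ f xbar := by rw [← hfy]; exact hyopt y hyFb
  linarith
end
end

section
/- Let f(x) = A_f^h x^d be a homogeneous polynomial of degree d with A_f^h ∈ S^{d,n}, and let f̄(y) = A_f^h (y_1,…,y_n)^d for y ∈ ℝ^{n+1}. Then x̄ ∈ ℝ^n is an optimal solution of min f(x) over x ∈ F if and only if ȳ = (x̄ᵀ, 1 − αᵀx̄)ᵀ ∈ ℝ^{n+1} is an optimal solution of min f̄(y) over y ∈ F̄ (assuming both problems have optimal solutions). -/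
open Finset Matrix Pointwise

noncomputable section

/-- `x̄` is optimal for the POP over `F` iff
`ȳ = (x̄ᵀ, 1 − αᵀx̄)ᵀ` is optimal for the homogenized problem over `F̄`
(assuming both problems have optimal solutions). -/
theorem homogenized_optimal_iff {d : ℕ}
{m n : ℕ} (B : Matrix (Fin m) (Fin n) ℝ) (b : Fin m → ℝ)
    (F : Set (Fin n → ℝ))
    (hF : F = {x | (∀ i, B.mulVec x i ≤ b i) ∧ ∀ j, 0 ≤ x j})
    (al : Fin n → ℝ) (hal : ∀ j, 0 ≤ al j) (halF : ∀ x ∈ F, al ⬝ᵥ x ≤ 1)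
    (a : Fin (n+1) → ℝ) (ha : a = Fin.snoc al 1)
    (A : Matrix (Fin (m + (n+1))) (Fin (n+1)) ℝ)
    (hA1 : ∀ (i : Fin m) (j : Fin (n+1)),
      A (Fin.castAdd (n+1) i) j = b i * a j - (Fin.snoc (B i) 0 : Fin (n+1) → ℝ) j)
    (hA2 : ∀ (i j : Fin (n+1)), A (Fin.natAdd m i) j = if i = j then 1 else 0)
    (Fb : Set (Fin (n+1) → ℝ))
    (hFb : Fb = {y | (∀ i, 0 ≤ A.mulVec y i) ∧ a ⬝ᵥ y = 1})
    (Ah : Tensor d n) (hsym : IsSymT Ah)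
    (f : (Fin n → ℝ) → ℝ) (hf : ∀ x, f x = tInner Ah (Md d x))
    (fb : (Fin (n+1) → ℝ) → ℝ)
    (hfb : ∀ y, fb y = tInner Ah (Md d (fun i => y (Fin.castSucc i))))
    (hexF : ∃ x₀ ∈ F, ∀ x ∈ F, f x₀ ≤ f x)
    (hexFb : ∃ y₀ ∈ Fb, ∀ y ∈ Fb, fb y₀ ≤ fb y)
    (xbar : Fin n → ℝ) :
    (xbar ∈ F ∧ ∀ x ∈ F, f xbar ≤ f x) ↔
    ((Fin.snoc xbar (1 - al ⬝ᵥ xbar) : Fin (n+1) → ℝ) ∈ Fb ∧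
      ∀ y ∈ Fb, fb (Fin.snoc xbar (1 - al ⬝ᵥ xbar)) ≤ fb y) := by
  have hrestr : ∀ (x : Fin n → ℝ) (c : ℝ),
      (fun i => (Fin.snoc x c : Fin (n+1) → ℝ) (Fin.castSucc i)) = x := by
    intro x c; funext i; simp
  have hvalx : ∀ (x : Fin n → ℝ) (c : ℝ), fb (Fin.snoc x c) = f x := by
    intro x c; rw [hfb, hf, hrestr]
  have hvaly : ∀ y : Fin (n+1) → ℝ, fb y = f (fun i => y (Fin.castSucc i)) := by
    intro y; rw [hfb, hf]
  have hrow1 : ∀ (y : Fin (n+1) → ℝ) (i : Fin m),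
      A.mulVec y (Fin.castAdd (n+1) i)
        = b i * (a ⬝ᵥ y) - B.mulVec (fun j => y (Fin.castSucc j)) i := by
    intro y i
    simp only [mulVec, dotProduct, hA1, sub_mul]
    rw [Finset.sum_sub_distrib]
    congr 1
    · rw [Finset.mul_sum]; congr 1; funext j; ring
    · rw [Fin.sum_univ_castSucc]
      simp [Fin.snoc_castSucc, Fin.snoc_last]
  have hrow2 : ∀ (y : Fin (n+1) → ℝ) (i : Fin (n+1)),
      A.mulVec y (Fin.natAdd m i) = y i := by
    intro y i
    simp [mulVec, dotProduct, hA2, ite_mul]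
  have hady : ∀ (x : Fin n → ℝ) (c : ℝ),
      a ⬝ᵥ (Fin.snoc x c : Fin (n+1) → ℝ) = al ⬝ᵥ x + c := by
    intro x c
    subst ha
    simp [dotProduct, Fin.sum_univ_castSucc]
  have hmem1 : ∀ x ∈ F, (Fin.snoc x (1 - al ⬝ᵥ x) : Fin (n+1) → ℝ) ∈ Fb := by
    intro x hx
    have hx' := hx
    rw [hF] at hx'
    obtain ⟨hBx, hx0⟩ := hx'
    have hdy : a ⬝ᵥ (Fin.snoc x (1 - al ⬝ᵥ x) : Fin (n+1) → ℝ) = 1 := by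
      rw [hady]; ring
    rw [hFb]
    refine ⟨?_, hdy⟩
    intro i
    refine Fin.addCases (fun i => ?_) (fun i => ?_) i
    · rw [hrow1, hdy, hrestr]
      have := hBx i
      linarith
    · rw [hrow2]
      refine Fin.lastCases ?_ (fun j => ?_) i
      · simp only [Fin.snoc_last]
        have := halF x hx
        linarith
      · simp only [Fin.snoc_castSucc]
        exact hx0 j
  have hmem2 : ∀ y ∈ Fb, (fun i => y (Fin.castSucc i)) ∈ F := by
    intro y hy
    rw [hFb] at hy
    obtain ⟨hAy, hay⟩ := hy
    rw [hF]
    constructor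
    · intro i
      have h := hAy (Fin.castAdd (n+1) i)
      rw [hrow1, hay] at h
      linarith
    · intro j
      have h := hAy (Fin.natAdd m (Fin.castSucc j))
      rw [hrow2] at h
      exact h
  constructor
  · rintro ⟨hxF, hopt⟩
    refine ⟨hmem1 xbar hxF, fun y hy => ?_⟩
    rw [hvalx, hvaly]
    exact hopt _ (hmem2 y hy)
  · rintro ⟨hyFb, hopt⟩
    have hxF : xbar ∈ F := by
      have := hmem2 _ hyFb
      rwa [hrestr] at this
    refine ⟨hxF, fun x hx => ?_⟩
    have h := hopt _ (hmem1 x hx)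
    rwa [hvalx, hvalx] at h
end
end

section
/- Let f(x) = A_f^h x^d be a homogeneous polynomial of degree d with A_f^h ∈ S^{d,n}, and let Ā ∈ S^{d,n+1} be the zero-padding of A_f^h. If min f(x) over x ∈ F has an optimal solution, then its optimal value equals the optimal value of the completely positive program: minimize ⟨Ā, X⟩ subject to X ∈ CP_{n+1,d}, ⟨X, M_d(a)⟩ = 1, and X ×₁A ×₂A ⋯ ×_d A ∈ CP_{m+n+1,d}. -/
open Finset Matrix Pointwise

noncomputable section

lemma LM {d q : ℕ} (g : Fin d → Fin q → ℝ) :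
    ∑ i : Fin d → Fin q, ∏ t, g t (i t) = ∏ t, ∑ x, g t x :=
  (Fintype.prod_sum g).symm

lemma L1 {d q : ℕ} (v a : Fin q → ℝ) :
    tInner (Md d v) (Md d a) = (∑ x, v x * a x) ^ d := by
  unfold tInner Md
  have : ∀ i : Fin d → Fin q, (∏ t, v (i t)) * ∏ t, a (i t) = ∏ t, (v (i t) * a (i t)) := by
    intro i; rw [Finset.prod_mul_distrib]
  rw [Finset.sum_congr rfl fun i _ => this i, LM (fun t x => v x * a x)]
  simp [Finset.prod_const]

lemma L2 {d q p : ℕ} (v : Fin q → ℝ) (A : Matrix (Fin p) (Fin q) ℝ) :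
    modeProd (Md d v) A = Md d (A.mulVec v) := by
  funext i
  unfold modeProd Md
  have : ∀ j : Fin d → Fin q, (∏ t, v (j t)) * ∏ t, A (i t) (j t)
      = ∏ t, (A (i t) (j t) * v (j t)) := by
    intro j; rw [Finset.prod_mul_distrib, mul_comm]
  rw [Finset.sum_congr rfl fun j _ => this j, LM (fun t x => A (i t) x * v x)]
  rfl

lemma L3 {d n : ℕ} (Ah : Tensor d n) (Abar : Tensor d (n+1))
    (hAbar : ∀ i : Fin d → Fin (n+1),
      Abar i = if h : ∀ t, ((i t : ℕ) < n) then Ah (fun t => ⟨i t, h t⟩) else 0)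
    (v : Fin (n+1) → ℝ) :
    tInner Abar (Md d v) = tInner Ah (Md d (fun t => v (Fin.castSucc t))) := by
  unfold tInner
  rw [← Finset.sum_filter_of_ne (p := fun i : Fin d → Fin (n+1) => ∀ t, ((i t : ℕ) < n))
    (by intro i _ hne
        by_contra h
        exact hne (by rw [hAbar i, dif_neg h, zero_mul]))]
  refine Finset.sum_bij'
    (fun (i : Fin d → Fin (n+1))
        (hi : i ∈ Finset.univ.filter (fun i : Fin d → Fin (n+1) => ∀ t, ((i t : ℕ) < n))) =>
      (fun t => (⟨i t, (Finset.mem_filter.mp hi).2 t⟩ : Fin n)))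
    (fun (i' : Fin d → Fin n) _ => Fin.castSucc ∘ i')
    (fun i hi => Finset.mem_univ _)
    (fun i' hi' => Finset.mem_filter.mpr ⟨Finset.mem_univ _, fun t => (i' t).isLt⟩)
    (fun i hi => by funext t; exact Fin.ext rfl)
    (fun i' hi' => by funext t; exact Fin.ext rfl)
    (fun i hi => ?_)
  rw [hAbar i, dif_pos (Finset.mem_filter.mp hi).2]
  rfl

lemma tInner_sum_left {d q k : ℕ} (T : Fin k → Tensor d q) (S : Tensor d q) :
    tInner (∑ j, T j) S = ∑ j, tInner (T j) S := by
  unfold tInner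
  rw [Finset.sum_comm]
  apply Finset.sum_congr rfl
  intro i _
  rw [Finset.sum_apply, Finset.sum_mul]

lemma tInner_comm {d q : ℕ} (S T : Tensor d q) : tInner S T = tInner T S :=
  Finset.sum_congr rfl fun i _ => mul_comm _ _

lemma homog {d n : ℕ} (Ah : Tensor d n) (c : ℝ) (x : Fin n → ℝ) :
    tInner Ah (Md d (c • x)) = c ^ d * tInner Ah (Md d x) := by
  unfold tInner Md
  rw [Finset.mul_sum]
  apply Finset.sum_congr rfl
  intro i _
  have : ∀ t : Fin d, (c • x) (i t) = c * x (i t) := fun t => rfl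
  rw [Finset.prod_congr rfl (fun t _ => this t), Finset.prod_mul_distrib,
    Finset.prod_const]
  simp
  ring

lemma contPoly {d n : ℕ} (Ah : Tensor d n) :
    Continuous (fun x : Fin n → ℝ => tInner Ah (Md d x)) := by
  unfold tInner Md
  apply continuous_finset_sum
  intro i _
  exact continuous_const.mul (continuous_finset_prod _ fun t _ => continuous_apply _)

lemma recession_nonneg {d n : ℕ} (hd : d ≠ 0) (Ah : Tensor d n) (xb z : Fin n → ℝ)
    (h : ∀ μ : ℝ, 0 ≤ μ → tInner Ah (Md d xb) ≤ tInner Ah (Md d (xb + μ • z))) :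
    0 ≤ tInner Ah (Md d z) := by
  by_contra hz
  push_neg at hz
  set g : (Fin n → ℝ) → ℝ := fun x => tInner Ah (Md d x) with hg
  have h1 : Filter.Tendsto (fun μ : ℝ => μ⁻¹ • xb + z) Filter.atTop (nhds z) := by
    have : Filter.Tendsto (fun μ : ℝ => μ⁻¹ • xb) Filter.atTop (nhds ((0:ℝ) • xb)) :=
      (tendsto_inv_atTop_zero).smul_const xb
    simpa using this.add_const z
  have h2 : Filter.Tendsto (fun μ : ℝ => g (μ⁻¹ • xb + z)) Filter.atTop (nhds (g z)) :=
    ((contPoly Ah).tendsto z).comp h1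
  have h3 : Filter.Tendsto (fun μ : ℝ => μ ^ d * g (μ⁻¹ • xb + z)) Filter.atTop Filter.atBot :=
    Filter.Tendsto.atTop_mul_neg hz (Filter.tendsto_pow_atTop hd) h2
  have h4 : ∀ᶠ μ : ℝ in Filter.atTop, μ ^ d * g (μ⁻¹ • xb + z) < g xb :=
    h3.eventually (Filter.eventually_lt_atBot _)
  obtain ⟨μ, hμ1, hμ2⟩ := (h4.and (Filter.eventually_ge_atTop 1)).exists
  have hμpos : (0:ℝ) < μ := lt_of_lt_of_le zero_lt_one hμ2
  have key : xb + μ • z = μ • (μ⁻¹ • xb + z) := by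
    rw [smul_add, smul_smul, mul_inv_cancel₀ (ne_of_gt hμpos), one_smul]
  have hle := h μ (le_of_lt hμpos)
  rw [key, homog Ah μ (μ⁻¹ • xb + z)] at hle
  exact absurd hle (not_le.mpr (lt_of_lt_of_le hμ1 (le_refl _)))

lemma prod_pair {d : ℕ} (t0 t1 : Fin d) (hne : t0 ≠ t1) (s c : ℝ) :
    ∏ t : Fin d, (if t ∈ ({t0, t1} : Finset (Fin d)) then s else c) = s ^ 2 * c ^ (d - 2) := by
  rw [Finset.prod_ite]
  rw [Finset.prod_const, Finset.prod_const]
  congr 1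
  · congr 1
    rw [Finset.filter_mem_eq_inter, Finset.univ_inter]
    rw [Finset.card_insert_of_notMem (by simp [hne]), Finset.card_singleton]
  · congr 1
    rw [Finset.filter_not, Finset.filter_mem_eq_inter, Finset.univ_inter,
      Finset.card_sdiff_of_subset (Finset.subset_univ _), Finset.card_univ, Fintype.card_fin,
      Finset.card_insert_of_notMem (by simp [hne]), Finset.card_singleton]

lemma decomp_ge2 {d m n : ℕ} (hd : 2 ≤ d)
    (A : Matrix (Fin (m + (n+1))) (Fin (n+1)) ℝ)
    (hA2 : ∀ (i j : Fin (n+1)), A (Fin.natAdd m i) j = if i = j then 1 else 0)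
    (X : Tensor d (n+1)) (hCP : modeProd X A ∈ CP d (m + (n+1))) :
    ∃ (k : ℕ) (v : Fin k → (Fin (n+1) → ℝ)),
      (∀ j r, 0 ≤ A.mulVec (v j) r) ∧ X = ∑ j, Md d (v j) := by
  obtain ⟨k, w, hw, hY⟩ := hCP
  set v : Fin k → Fin (n+1) → ℝ := fun j x => w j (Fin.natAdd m x) with hv
  -- identity-row products
  have hAnat : ∀ (i jj : Fin d → Fin (n+1)),
      (∏ t, A (Fin.natAdd m (i t)) (jj t)) = if i = jj then 1 else 0 := by
    intro i jj
    rw [Finset.prod_congr rfl (fun t _ => hA2 (i t) (jj t)), Finset.prod_boole]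
    congr 1
    simp [funext_iff]
  -- X decomposes via v
  have hXdec : X = ∑ j, Md d (v j) := by
    funext i
    have h1 := congrFun hY (fun t => Fin.natAdd m (i t))
    have hL : modeProd X A (fun t => Fin.natAdd m (i t)) = X i := by
      unfold modeProd
      rw [Finset.sum_congr rfl (fun jj _ => by rw [hAnat i jj])]
      simp
    have hR : (∑ j, Md d (w j)) (fun t => Fin.natAdd m (i t)) = (∑ j, Md d (v j)) i := by
      rw [Finset.sum_apply, Finset.sum_apply]
      exact Finset.sum_congr rfl fun c _ => rfl
    rw [hL, hR] at h1
    exact h1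
  refine ⟨k, v, ?_, hXdec⟩
  -- the vanishing lemma
  have hvan : ∀ u : Fin (m + (n+1)) → ℝ, (∀ x : Fin (n+1), (∑ r, A r x * u r) = 0) →
      ∀ j, w j ≠ 0 → (∑ r, w j r * u r) = 0 := by
    intro u hu
    have h0 : 0 < d := by omega
    have h1 : 1 < d := by omega
    set t0 : Fin d := ⟨0, h0⟩
    set t1 : Fin d := ⟨1, h1⟩
    have hne : t0 ≠ t1 := by simp [t0, t1, Fin.ext_iff]
    set U : Fin d → Fin (m + (n+1)) → ℝ :=
      fun t => if t ∈ ({t0, t1} : Finset (Fin d)) then u else (fun _ => 1) with hU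
    have key : ∑ j, (∑ r, w j r * u r) ^ 2 * (∑ r, w j r) ^ (d - 2) = 0 := by
      have e1 : ∀ j, (∑ r, w j r * u r) ^ 2 * (∑ r, w j r) ^ (d - 2)
          = ∏ t, ∑ r, w j r * U t r := by
        intro j
        rw [← prod_pair t0 t1 hne (∑ r, w j r * u r) (∑ r, w j r)]
        apply Finset.prod_congr rfl
        intro t _
        have hUt : U t = if t ∈ ({t0, t1} : Finset (Fin d)) then u else (fun _ => 1) := rfl
        by_cases ht : t ∈ ({t0, t1} : Finset (Fin d))
        · rw [if_pos ht, hUt, if_pos ht]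
        · rw [if_neg ht, hUt, if_neg ht]; simp
      rw [Finset.sum_congr rfl (fun j _ => e1 j)]
      have e2 : ∀ j, (∏ t, ∑ r, w j r * U t r)
          = ∑ i : Fin d → Fin (m + (n+1)), ∏ t, (w j (i t) * U t (i t)) :=
        fun j => (LM (fun t r => w j r * U t r)).symm
      rw [Finset.sum_congr rfl (fun j _ => e2 j), Finset.sum_comm]
      have e3 : ∀ i : Fin d → Fin (m + (n+1)),
          (∑ j, ∏ t, (w j (i t) * U t (i t)))
            = modeProd X A i * ∏ t, U t (i t) := by
        intro i
        rw [hY, Finset.sum_apply, Finset.sum_mul]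
        apply Finset.sum_congr rfl
        intro j _
        rw [Finset.prod_mul_distrib]
        rfl
      rw [Finset.sum_congr rfl (fun i _ => e3 i)]
      unfold modeProd
      have e4 : ∀ i : Fin d → Fin (m + (n+1)),
          (∑ jj : Fin d → Fin (n+1), X jj * ∏ t, A (i t) (jj t)) * ∏ t, U t (i t)
          = ∑ jj : Fin d → Fin (n+1), X jj * ∏ t, (A (i t) (jj t) * U t (i t)) := by
        intro i
        rw [Finset.sum_mul]
        apply Finset.sum_congr rfl
        intro jj _
        rw [mul_assoc, Finset.prod_mul_distrib]
      rw [Finset.sum_congr rfl (fun i _ => e4 i), Finset.sum_comm]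
      apply Finset.sum_eq_zero
      intro jj _
      rw [← Finset.mul_sum, LM (fun t r => A r (jj t) * U t r)]
      have : (∑ r, A r (jj t0) * U t0 r) = 0 := by
        have hU0 : U t0 = u := by simp [hU]
        rw [hU0]
        exact hu (jj t0)
      rw [Finset.prod_eq_zero (Finset.mem_univ t0) this, mul_zero]
    intro j hj
    have hterm := (Finset.sum_eq_zero_iff_of_nonneg (fun j _ =>
      mul_nonneg (sq_nonneg _) (pow_nonneg (Finset.sum_nonneg fun r _ => hw j r) _))).mp
      key j (Finset.mem_univ j)
    have hcpos : 0 < ∑ r, w j r := by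
      rcases Function.ne_iff.mp hj with ⟨r0, hr0⟩
      exact Finset.sum_pos' (fun r _ => hw j r)
        ⟨r0, Finset.mem_univ r0, lt_of_le_of_ne (hw j r0) (Ne.symm hr0)⟩
    have : (∑ r, w j r * u r) ^ 2 = 0 := by
      rcases mul_eq_zero.mp hterm with h | h
      · exact h
      · exact absurd h (ne_of_gt (pow_pos hcpos _))
    exact pow_eq_zero_iff (by norm_num) |>.mp this
  -- now show A.mulVec (v j) = w j for each j
  intro j r
  by_cases hwj : w j = 0
  · have : v j = 0 := by funext x; simp [hv, hwj]
    rw [this, Matrix.mulVec_zero]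
    simp
  · have hnat : ∀ x : Fin (n+1), A.mulVec (v j) (Fin.natAdd m x) = v j x := by
      intro x
      simp only [Matrix.mulVec, dotProduct, hA2]
      simp
    set r0 : Fin (m + (n+1)) → ℝ := fun rr => w j rr - A.mulVec (v j) rr with hr0def
    set u : Fin (m + (n+1)) → ℝ := Fin.addCases (fun i => r0 (Fin.castAdd (n+1) i))
      (fun x => -∑ i, r0 (Fin.castAdd (n+1) i) * A (Fin.castAdd (n+1) i) x) with hudef
    have hu : ∀ x, (∑ rr, A rr x * u rr) = 0 := by
      intro x
      rw [Fin.sum_univ_add]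
      have h2 : ∑ x' : Fin (n+1), A (Fin.natAdd m x') x * u (Fin.natAdd m x')
          = u (Fin.natAdd m x) := by
        simp only [hA2]
        simp
      rw [h2]
      have h3 : u (Fin.natAdd m x) = -∑ i, r0 (Fin.castAdd (n+1) i) * A (Fin.castAdd (n+1) i) x := by
        simp [hudef]
      have h4 : ∀ i : Fin m, u (Fin.castAdd (n+1) i) = r0 (Fin.castAdd (n+1) i) := by
        intro i; simp [hudef]
      rw [h3, Finset.sum_congr rfl (fun i _ => by rw [h4 i, mul_comm])]
      ring
    have hwu : (∑ rr, w j rr * u rr) = 0 := hvan u hu j hwj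
    have hAvu : (∑ rr, A.mulVec (v j) rr * u rr) = 0 := by
      have : ∀ rr, A.mulVec (v j) rr * u rr = ∑ x, v j x * (A rr x * u rr) := by
        intro rr
        unfold Matrix.mulVec dotProduct
        rw [Finset.sum_mul]
        exact Finset.sum_congr rfl (fun x _ => by ring)
      rw [Finset.sum_congr rfl (fun rr _ => this rr), Finset.sum_comm]
      apply Finset.sum_eq_zero
      intro x _
      rw [← Finset.mul_sum, hu x, mul_zero]
    have hr0u : (∑ rr, r0 rr * u rr) = 0 := by
      have : ∀ rr, r0 rr * u rr = w j rr * u rr - A.mulVec (v j) rr * u rr := by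
        intro rr; simp [hr0def]; ring
      rw [Finset.sum_congr rfl (fun rr _ => this rr), Finset.sum_sub_distrib, hwu, hAvu, sub_zero]
    have hr0nat : ∀ x, r0 (Fin.natAdd m x) = 0 := by
      intro x; simp [hr0def, hnat]; simp [hv]
    have hsq : (∑ i : Fin m, r0 (Fin.castAdd (n+1) i) ^ 2) = 0 := by
      have hsplit := Fin.sum_univ_add (fun rr => r0 rr * u rr)
      have h2 : (∑ x : Fin (n+1), r0 (Fin.natAdd m x) * u (Fin.natAdd m x)) = 0 :=
        Finset.sum_eq_zero fun x _ => by rw [hr0nat x, zero_mul]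
      have h3 : (∑ i : Fin m, r0 (Fin.castAdd (n+1) i) * u (Fin.castAdd (n+1) i))
          = ∑ i : Fin m, r0 (Fin.castAdd (n+1) i) ^ 2 := by
        apply Finset.sum_congr rfl
        intro i _
        have h4 : u (Fin.castAdd (n+1) i) = r0 (Fin.castAdd (n+1) i) := by simp [hudef]
        rw [h4]; ring
      rw [← h3]
      linarith [hr0u, hsplit, h2]
    have hcast : ∀ i : Fin m, r0 (Fin.castAdd (n+1) i) = 0 := by
      intro i
      have := (Finset.sum_eq_zero_iff_of_nonneg (fun i _ => sq_nonneg _)).mp hsq i (Finset.mem_univ i)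
      exact pow_eq_zero_iff (by norm_num) |>.mp this
    have hr0 : ∀ rr, r0 rr = 0 := fun rr => Fin.addCases hcast hr0nat rr
    have : A.mulVec (v j) r = w j r := by
      have := hr0 r
      simp [hr0def] at this
      linarith
    rw [this]
    exact hw j r


/-- The homogeneous POP over `F = {x : Bx ≤ b, x ≥ 0}` is equivalent to a
completely positive tensor program: the optimal values coincide. -/
theorem homogeneous_CPTP_same_value {d : ℕ}
{m n : ℕ} (B : Matrix (Fin m) (Fin n) ℝ) (b : Fin m → ℝ)
    (F : Set (Fin n → ℝ))
    (hF : F = {x | (∀ i, B.mulVec x i ≤ b i) ∧ ∀ j, 0 ≤ x j})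
    (al : Fin n → ℝ) (hal : ∀ j, 0 ≤ al j) (halF : ∀ x ∈ F, al ⬝ᵥ x ≤ 1)
    (a : Fin (n+1) → ℝ) (ha : a = Fin.snoc al 1)
    (A : Matrix (Fin (m + (n+1))) (Fin (n+1)) ℝ)
    (hA1 : ∀ (i : Fin m) (j : Fin (n+1)),
      A (Fin.castAdd (n+1) i) j = b i * a j - (Fin.snoc (B i) 0 : Fin (n+1) → ℝ) j)
    (hA2 : ∀ (i j : Fin (n+1)), A (Fin.natAdd m i) j = if i = j then 1 else 0)
    (Fb : Set (Fin (n+1) → ℝ))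
    (hFb : Fb = {y | (∀ i, 0 ≤ A.mulVec y i) ∧ a ⬝ᵥ y = 1})
    (Ah : Tensor d n) (hsym : IsSymT Ah)
    (f : (Fin n → ℝ) → ℝ) (hf : ∀ x, f x = tInner Ah (Md d x))
    (Abar : Tensor d (n+1))
    (hAbar : ∀ i : Fin d → Fin (n+1),
      Abar i = if h : ∀ t, ((i t : ℕ) < n) then Ah (fun t => ⟨i t, h t⟩) else 0)
    (xbar : Fin n → ℝ) (hx : xbar ∈ F) (hxopt : ∀ x ∈ F, f xbar ≤ f x) :
    sInf (tInner Abar '' {X | X ∈ CP d (n+1) ∧ tInner X (Md d a) = 1 ∧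
      modeProd X A ∈ CP d (m + (n+1))}) = f xbar := by
  have haj : ∀ j : Fin n, a (Fin.castSucc j) = al j := fun j => by
    rw [ha]; exact Fin.snoc_castSucc _ _ _
  have halast : a (Fin.last n) = 1 := by rw [ha]; exact Fin.snoc_last _ _
  have ha0 : ∀ x, 0 ≤ a x := by
    intro x
    induction x using Fin.lastCases with
    | last => rw [halast]; norm_num
    | cast j => rw [haj]; exact hal j
  have hxF : (∀ i, B.mulVec xbar i ≤ b i) ∧ ∀ j, 0 ≤ xbar j := by rw [hF] at hx; exact hx
  set y : Fin (n+1) → ℝ := Fin.snoc xbar (1 - al ⬝ᵥ xbar) with hydef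
  have hycast : ∀ k : Fin n, y (Fin.castSucc k) = xbar k := fun k => Fin.snoc_castSucc _ _ _
  have hylast : y (Fin.last n) = 1 - al ⬝ᵥ xbar := Fin.snoc_last _ _
  have hy0 : ∀ x, 0 ≤ y x := by
    intro x
    induction x using Fin.lastCases with
    | last => rw [hylast]; have := halF xbar hx; linarith
    | cast j => rw [hycast]; exact hxF.2 j
  have hdot : ∀ vv : Fin (n+1) → ℝ, (∑ x, a x * vv x)
      = (∑ j, al j * vv (Fin.castSucc j)) + vv (Fin.last n) := by
    intro vv
    rw [Fin.sum_univ_castSucc]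
    rw [halast, one_mul]
    congr 1
    exact Finset.sum_congr rfl fun j _ => by rw [haj]
  have hay : (∑ x, a x * y x) = 1 := by
    rw [hdot, hylast]
    have : (∑ j, al j * y (Fin.castSucc j)) = al ⬝ᵥ xbar :=
      Finset.sum_congr rfl fun j _ => by rw [hycast]
    rw [this]; ring
  have hrowcast : ∀ (vv : Fin (n+1) → ℝ) (i : Fin m),
      A.mulVec vv (Fin.castAdd (n+1) i)
        = b i * (∑ x, a x * vv x) - ∑ k, B i k * vv (Fin.castSucc k) := by
    intro vv i
    have h1 : A.mulVec vv (Fin.castAdd (n+1) i)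
        = ∑ x, (b i * a x - (Fin.snoc (B i) 0 : Fin (n+1) → ℝ) x) * vv x := by
      simp only [Matrix.mulVec, dotProduct, hA1]
    rw [h1]
    have h2 : ∀ x, (b i * a x - (Fin.snoc (B i) 0 : Fin (n+1) → ℝ) x) * vv x
        = b i * (a x * vv x) - (Fin.snoc (B i) 0 : Fin (n+1) → ℝ) x * vv x := fun x => by ring
    rw [Finset.sum_congr rfl fun x _ => h2 x, Finset.sum_sub_distrib, ← Finset.mul_sum]
    congr 1
    rw [Fin.sum_univ_castSucc]
    simp
  have hrownat : ∀ (vv : Fin (n+1) → ℝ) (x : Fin (n+1)), A.mulVec vv (Fin.natAdd m x) = vv x := by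
    intro vv x
    simp only [Matrix.mulVec, dotProduct, hA2]
    simp
  have hAy : ∀ r, 0 ≤ A.mulVec y r := by
    intro r
    refine Fin.addCases (fun i => ?_) (fun x => ?_) r
    · rw [hrowcast y i, hay, mul_one]
      have h5 : (∑ k, B i k * y (Fin.castSucc k)) = ∑ k, B i k * xbar k :=
        Finset.sum_congr rfl fun k _ => by rw [hycast]
      rw [h5]
      have h6 : B.mulVec xbar i = ∑ k, B i k * xbar k := rfl
      have := hxF.1 i
      linarith
    · rw [hrownat]; exact hy0 x
  -- key pointwise bound
  have hbound : ∀ vv : Fin (n+1) → ℝ, (∀ r, 0 ≤ A.mulVec vv r) →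
      f xbar * (∑ x, vv x * a x) ^ d ≤ f (fun t => vv (Fin.castSucc t)) := by
    intro vv hAvv
    have hvv0 : ∀ x, 0 ≤ vv x := fun x => by rw [← hrownat vv x]; exact hAvv _
    set z : Fin n → ℝ := fun t => vv (Fin.castSucc t) with hzdef
    have hswap : (∑ x, vv x * a x) = ∑ x, a x * vv x :=
      Finset.sum_congr rfl fun x _ => mul_comm _ _
    rw [hswap]
    set lam := ∑ x, a x * vv x with hlamdef
    have hlam0 : 0 ≤ lam := Finset.sum_nonneg fun x _ => mul_nonneg (ha0 x) (hvv0 x)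
    have hz0 : ∀ k, 0 ≤ z k := fun k => hvv0 _
    have hBz : ∀ i, (∑ k, B i k * z k) ≤ b i * lam := by
      intro i
      have := hAvv (Fin.castAdd (n+1) i)
      rw [hrowcast] at this
      linarith
    rcases eq_or_lt_of_le hlam0 with h0 | hpos
    · rcases Nat.eq_zero_or_pos d with hd0 | hdpos
      · subst hd0
        have hzx : f z = f xbar := by
          rw [hf z, hf xbar]
          unfold tInner
          exact Finset.sum_congr rfl fun i _ => by simp [Md]
        rw [pow_zero, mul_one, hzx]
      · rw [← h0, zero_pow (by omega), mul_zero, hf]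
        apply recession_nonneg (by omega) Ah xbar z
        intro μ hμ
        rw [← hf, ← hf]
        apply hxopt
        rw [hF]
        constructor
        · intro i
          have h6 : B.mulVec (xbar + μ • z) i = B.mulVec xbar i + μ * B.mulVec z i := by
            rw [Matrix.mulVec_add, Matrix.mulVec_smul]
            simp
          have h7 : B.mulVec z i ≤ 0 := by
            have h8 : B.mulVec z i = ∑ k, B i k * z k := rfl
            have h9 := hBz i
            rw [← h0, mul_zero] at h9
            rw [h8]
            linarith
          rw [h6]
          nlinarith [hxF.1 i, mul_nonpos_of_nonneg_of_nonpos hμ h7]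
        · intro jj
          have : (xbar + μ • z) jj = xbar jj + μ * z jj := rfl
          rw [this]
          have := mul_nonneg hμ (hz0 jj)
          linarith [hxF.2 jj]
    · have hmemF : (lam⁻¹ • z) ∈ F := by
        rw [hF]
        refine ⟨fun i => ?_, fun k => ?_⟩
        · have h6 : B.mulVec (lam⁻¹ • z) i = lam⁻¹ * ∑ k, B i k * z k := by
            rw [Matrix.mulVec_smul]
            simp [Matrix.mulVec, dotProduct]
          rw [h6]
          calc lam⁻¹ * ∑ k, B i k * z k ≤ lam⁻¹ * (b i * lam) :=
                mul_le_mul_of_nonneg_left (hBz i) (inv_nonneg.mpr hlam0)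
            _ = b i := by field_simp
        · have : (lam⁻¹ • z) k = lam⁻¹ * z k := rfl
          rw [this]
          exact mul_nonneg (inv_nonneg.mpr hlam0) (hz0 k)
      have h7 := hxopt _ hmemF
      have h8 : f (lam⁻¹ • z) = lam⁻¹ ^ d * f z := by rw [hf, hf]; exact homog Ah _ z
      rw [h8] at h7
      have h9 := mul_le_mul_of_nonneg_right h7 (pow_nonneg hlam0 d)
      calc f xbar * lam ^ d ≤ lam⁻¹ ^ d * f z * lam ^ d := h9
        _ = f z := by
            rw [mul_comm (lam⁻¹ ^ d) (f z), mul_assoc, ← mul_pow,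
              inv_mul_cancel₀ (ne_of_gt hpos), one_pow, mul_one]
  -- the witness is feasible with value f xbar
  have hXmem : Md d y ∈ {X | X ∈ CP d (n+1) ∧ tInner X (Md d a) = 1 ∧
      modeProd X A ∈ CP d (m + (n+1))} := by
    refine ⟨⟨1, fun _ => y, fun _ => hy0, (Fin.sum_univ_one (fun _ => Md d y)).symm⟩, ?_,
      ⟨1, fun _ => A.mulVec y, fun _ => hAy, ?_⟩⟩
    · rw [L1]
      rw [Finset.sum_congr rfl fun x _ => mul_comm (y x) (a x), hay, one_pow]
    · rw [L2]
      exact (Fin.sum_univ_one (fun _ => Md d (A.mulVec y))).symm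
  have hXval : tInner Abar (Md d y) = f xbar := by
    rw [L3 Ah Abar hAbar y]
    have hzy : (fun t => y (Fin.castSucc t)) = xbar := funext fun t => hycast t
    rw [hzy, ← hf]
  -- every feasible value is at least f xbar
  have hlb : ∀ r ∈ tInner Abar '' {X | X ∈ CP d (n+1) ∧ tInner X (Md d a) = 1 ∧
      modeProd X A ∈ CP d (m + (n+1))}, f xbar ≤ r := by
    rintro r ⟨X, ⟨hXCP, hX1, hXA⟩, rfl⟩
    obtain ⟨k, v, hAv, hXdec⟩ : ∃ (k : ℕ) (v : Fin k → (Fin (n+1) → ℝ)),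
        (∀ j rr, 0 ≤ A.mulVec (v j) rr) ∧ X = ∑ j, Md d (v j) := by
      rcases Nat.lt_or_ge d 2 with hd | hd
      · interval_cases d
        · -- d = 0
          refine ⟨1, fun _ => y, fun _ => hAy, ?_⟩
          have hXi : ∀ i : Fin 0 → Fin (n+1), X i = 1 := by
            intro i
            have h1 : tInner X (Md 0 a) = X i := by
              unfold tInner
              rw [show (Finset.univ : Finset (Fin 0 → Fin (n+1))) = {i} from
                Finset.eq_singleton_iff_unique_mem.mpr
                  ⟨Finset.mem_univ i, fun x _ => Subsingleton.elim x i⟩,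
                Finset.sum_singleton]
              simp [Md]
            rw [← h1, hX1]
          funext i
          rw [Finset.sum_apply, Fin.sum_univ_one, hXi i]
          simp [Md]
        · -- d = 1
          obtain ⟨k, w, hw, hY⟩ := hXA
          have hXv : ∀ i : Fin 1 → Fin (n+1), X i = X (fun _ => i 0) := by
            intro i
            congr 1
            funext t
            rw [Subsingleton.elim t 0]
          refine ⟨1, fun _ => (fun x => X (fun _ => x)), fun _ rr => ?_, ?_⟩
          · have h1 := congrFun hY (fun _ => rr)
            have hL : modeProd X A (fun _ => rr) = A.mulVec (fun x => X fun _ => x) rr := by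
              unfold modeProd Matrix.mulVec dotProduct
              apply Fintype.sum_equiv (Equiv.funUnique (Fin 1) (Fin (n+1)))
              intro jj
              rw [Fin.prod_univ_one]
              rw [hXv jj]
              have : (Equiv.funUnique (Fin 1) (Fin (n+1))) jj = jj 0 := rfl
              rw [this, mul_comm]
            have hR : (∑ j, Md 1 (w j)) (fun _ => rr) = ∑ j, w j rr := by
              rw [Finset.sum_apply]
              exact Finset.sum_congr rfl fun j _ => Fin.prod_univ_one _
            rw [hL, hR] at h1
            rw [h1]
            exact Finset.sum_nonneg fun j _ => hw j rr
          · funext i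
            rw [Finset.sum_apply, Fin.sum_univ_one]
            have : Md 1 (fun x => X fun _ => x) i = X (fun _ => i 0) := Fin.prod_univ_one _
            rw [this, ← hXv i]
      · exact decomp_ge2 hd A hA2 X hXA
    rw [hXdec, tInner_comm, tInner_sum_left]
    have hval : ∀ j, tInner (Md d (v j)) Abar = f (fun t => v j (Fin.castSucc t)) := fun j => by
      rw [tInner_comm, L3 Ah Abar hAbar, ← hf]
    rw [Finset.sum_congr rfl fun j _ => hval j]
    have hsum1 : (∑ j, (∑ x, v j x * a x) ^ d) = 1 := by
      rw [← hX1, hXdec, tInner_sum_left]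
      exact (Finset.sum_congr rfl fun j _ => (L1 (v j) a)).symm
    calc f xbar = ∑ j, f xbar * (∑ x, v j x * a x) ^ d := by
          rw [← Finset.mul_sum, hsum1, mul_one]
      _ ≤ ∑ j, f (fun t => v j (Fin.castSucc t)) :=
          Finset.sum_le_sum fun j _ => hbound (v j) (hAv j)
  apply le_antisymm
  · exact csInf_le ⟨f xbar, fun r hr => hlb r hr⟩ ⟨Md d y, hXmem, hXval⟩
  · exact le_csInf ⟨f xbar, ⟨Md d y, hXmem, hXval⟩⟩ hlb
end
end

section
/- Let f be a polynomial of degree at most d in n real variables and let f̄(y) = f(y_1,…,y_n) for y ∈ ℝ^{n+1} (f̄ is f viewed as a polynomial in n+1 variables, obtained by zero-padding each homogeneous component's coefficient tensor). If min f(x) over x ∈ F and min f̄(y) over y ∈ F̄ both have optimal solutions, then they share the same optimal value. -/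
open Finset Matrix Pointwise

noncomputable section

/-- The inhomogeneous POP over `F` and the problem for
`f̄(y) = f(y₁,…,yₙ)` over `F̄` share the same optimal value. -/
theorem inhomogeneous_same_value {d : ℕ}
{m n : ℕ} (B : Matrix (Fin m) (Fin n) ℝ) (b : Fin m → ℝ)
    (F : Set (Fin n → ℝ))
    (hF : F = {x | (∀ i, B.mulVec x i ≤ b i) ∧ ∀ j, 0 ≤ x j})
    (al : Fin n → ℝ) (hal : ∀ j, 0 ≤ al j) (halF : ∀ x ∈ F, al ⬝ᵥ x ≤ 1)
    (a : Fin (n+1) → ℝ) (ha : a = Fin.snoc al 1)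
    (A : Matrix (Fin (m + (n+1))) (Fin (n+1)) ℝ)
    (hA1 : ∀ (i : Fin m) (j : Fin (n+1)),
      A (Fin.castAdd (n+1) i) j = b i * a j - (Fin.snoc (B i) 0 : Fin (n+1) → ℝ) j)
    (hA2 : ∀ (i j : Fin (n+1)), A (Fin.natAdd m i) j = if i = j then 1 else 0)
    (Fb : Set (Fin (n+1) → ℝ))
    (hFb : Fb = {y | (∀ i, 0 ≤ A.mulVec y i) ∧ a ⬝ᵥ y = 1})
    (Af : Tensor d (n+1)) (hsym : IsSymT Af)
    (f : (Fin n → ℝ) → ℝ)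
    (hf : ∀ x, f x = tInner Af (Md d (Fin.cons 1 x)))
    (fb : (Fin (n+1) → ℝ) → ℝ)
    (hfb : ∀ y, fb y = f (fun i => y (Fin.castSucc i)))
    (xbar : Fin n → ℝ) (hx : xbar ∈ F) (hxopt : ∀ x ∈ F, f xbar ≤ f x)
    (ybar : Fin (n+1) → ℝ) (hy : ybar ∈ Fb) (hyopt : ∀ y ∈ Fb, fb ybar ≤ fb y) :
    f xbar = fb ybar := by
  subst ha hFb hF
  -- basic computations
  have hdot : ∀ y : Fin (n+1) → ℝ, (Fin.snoc al 1 : Fin (n+1) → ℝ) ⬝ᵥ y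
      = al ⬝ᵥ (fun i => y (Fin.castSucc i)) + y (Fin.last n) := by
    intro y
    simp [dotProduct, Fin.sum_univ_castSucc]
  have hrow : ∀ (y : Fin (n+1) → ℝ) (i : Fin m),
      A.mulVec y (Fin.castAdd (n+1) i)
      = b i * ((Fin.snoc al 1 : Fin (n+1) → ℝ) ⬝ᵥ y)
        - B.mulVec (fun j => y (Fin.castSucc j)) i := by
    intro y i
    simp only [Matrix.mulVec, dotProduct, hA1, sub_mul, Finset.sum_sub_distrib,
      mul_assoc, ← Finset.mul_sum]
    congr 1
    rw [Fin.sum_univ_castSucc]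
    simp
  have hid : ∀ (y : Fin (n+1) → ℝ) (i : Fin (n+1)),
      A.mulVec y (Fin.natAdd m i) = y i := by
    intro y i
    simp [Matrix.mulVec, dotProduct, hA2]
  -- embed a feasible x into Fb
  have hemb : ∀ x : Fin n → ℝ,
      x ∈ {x | (∀ i, B.mulVec x i ≤ b i) ∧ ∀ j, 0 ≤ x j} →
      (Fin.snoc x (1 - al ⬝ᵥ x) : Fin (n+1) → ℝ) ∈
        {y | (∀ i, 0 ≤ A.mulVec y i) ∧ (Fin.snoc al 1 : Fin (n+1) → ℝ) ⬝ᵥ y = 1} := by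
    intro x hxF
    set y : Fin (n+1) → ℝ := Fin.snoc x (1 - al ⬝ᵥ x) with hydef
    have hrestr : (fun i => y (Fin.castSucc i)) = x := by
      funext i; simp [hydef]
    have hay : (Fin.snoc al 1 : Fin (n+1) → ℝ) ⬝ᵥ y = 1 := by
      rw [hdot, hrestr]; simp [hydef]
    refine ⟨?_, hay⟩
    intro i
    induction i using Fin.addCases with
    | left i =>
      rw [hrow, hay, hrestr, mul_one, sub_nonneg]
      exact hxF.1 i
    | right i =>
      rw [hid]
      induction i using Fin.lastCases with
      | last =>
        simp only [hydef, Fin.snoc_last]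
        have := halF x hxF
        linarith
      | cast i => simpa [hydef] using hxF.2 i
  -- restriction of a feasible y lies in F
  have hres : ∀ y : Fin (n+1) → ℝ,
      y ∈ {y | (∀ i, 0 ≤ A.mulVec y i) ∧ (Fin.snoc al 1 : Fin (n+1) → ℝ) ⬝ᵥ y = 1} →
      (fun i => y (Fin.castSucc i)) ∈ {x | (∀ i, B.mulVec x i ≤ b i) ∧ ∀ j, 0 ≤ x j} := by
    intro y hyF
    constructor
    · intro i
      have h := hyF.1 (Fin.castAdd (n+1) i)
      rw [hrow, hyF.2, mul_one, sub_nonneg] at h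
      exact h
    · intro j
      have h := hyF.1 (Fin.natAdd m (Fin.castSucc j))
      rwa [hid] at h
  -- two inequalities
  have h1 : fb ybar ≤ f xbar := by
    have h := hyopt _ (hemb xbar hx)
    simp only [hfb] at h
    have hrestr : (fun i => (Fin.snoc xbar (1 - al ⬝ᵥ xbar) : Fin (n+1) → ℝ) (Fin.castSucc i)) = xbar := by
      funext i; simp
    rw [hrestr] at h
    rw [hfb]
    exact h
  have h2 : f xbar ≤ fb ybar := by
    rw [hfb]
    exact hxopt _ (hres ybar hy)
  linarith
end
end
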